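/- Fix ρ_p > 0, h > 0, and a point X_T ∈ ℝ² with r_T = |X_T|. For each integer n ≥ 2 let R_n = √(n/(π ρ_p)), let X_1, …, X_n be i.i.d. random points uniformly distributed on the closed disk of radius R_n centered at the origin in ℝ², and let M_1, …, M_n be i.i.d. random variables uniformly distributed on [0,1], independent of the positions. Define P_i = 1 if and only if |X_i − X_T| ≥ h and M_i < M_j for every j ≠ i with |X_i − X_j| < h, and let 𝒜_n be the event that X_1 and X_2 both lie in the annulus {x ∈ ℝ² : r_T + 2h ≤ |x| ≤ R_n − h} and |X_1 − X_2| > 2h. Then lim_{n→∞} Pr(P_1 = 1 and P_2 = 1 | 𝒜_n) = ( (1 − exp(−π ρ_p h²)) / (π ρ_p h²) )². -/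

import Mathlib

open MeasureTheory ProbabilityTheory Set Real Filter Topology
open scoped ENNReal

/-- The uniform probability measure on the closed disk of radius `R` centered at the
origin of the plane. -/
noncomputable def unifDisk (R : ℝ) : Measure (EuclideanSpace ℝ (Fin 2)) :=
  (volume (Metric.closedBall (0 : EuclideanSpace ℝ (Fin 2)) R))⁻¹ •
    volume.restrict (Metric.closedBall (0 : EuclideanSpace ℝ (Fin 2)) R)

/-- The uniform probability measure on `[0,1]`. -/
noncomputable def unifUnit : Measure ℝ := volume.restrict (Set.Icc (0:ℝ) 1)

abbrev Plane := EuclideanSpace ℝ (Fin 2)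

lemma vol_ball_plane (x : Plane) (r : ℝ) (hr : 0 ≤ r) :
    volume (Metric.ball x r) = ENNReal.ofReal (π * r ^ 2) := by
  rw [EuclideanSpace.volume_ball]
  have h2 : (Fintype.card (Fin 2) : ℝ) = 2 := by simp
  rw [Fintype.card_fin]
  norm_num [Real.Gamma_two]
  rw [← ENNReal.ofReal_pow hr, ← ENNReal.ofReal_pow (Real.sqrt_nonneg _), Real.sq_sqrt Real.pi_nonneg,
    ← ENNReal.ofReal_mul (by positivity)]
  ring_nf

lemma vol_closedBall_plane (x : Plane) (r : ℝ) (hr : 0 ≤ r) :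
    volume (Metric.closedBall x r) = ENNReal.ofReal (π * r ^ 2) := by
  rw [Measure.addHaar_closedBall_eq_addHaar_ball, vol_ball_plane x r hr]

instance unifUnit_prob : IsProbabilityMeasure unifUnit := by
  constructor
  rw [unifUnit, Measure.restrict_apply MeasurableSet.univ, Set.univ_inter, Real.volume_Icc]
  norm_num

lemma unifDisk_prob {R : ℝ} (hR : 0 < R) : IsProbabilityMeasure (unifDisk R) := by
  constructor
  rw [unifDisk, Measure.smul_apply, Measure.restrict_apply MeasurableSet.univ, Set.univ_inter,
    smul_eq_mul]
  refine ENNReal.inv_mul_cancel ?_ ?_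
  · rw [vol_closedBall_plane _ _ hR.le]
    simp [ENNReal.ofReal_eq_zero, not_le]
    positivity
  · exact (measure_closedBall_lt_top).ne

lemma unifUnit_Iic (m : ℝ) : unifUnit (Iic m) = ENNReal.ofReal (min m 1) := by
  rw [unifUnit, Measure.restrict_apply measurableSet_Iic]
  rcases le_total m 0 with hm | hm
  · have h0 : volume (Iic m ∩ Icc (0:ℝ) 1) = 0 := by
      refine measure_mono_null ?_ (Real.volume_singleton (a := 0))
      rintro x ⟨(h1 : x ≤ m), h2, h3⟩
      simp only [mem_singleton_iff]
      linarith
    rw [h0, Eq.comm, ENNReal.ofReal_eq_zero]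
    exact le_trans (min_le_left _ _) hm
  · rcases le_total m 1 with hm1 | hm1
    · have : Iic m ∩ Icc 0 1 = Icc 0 m := by
        ext x; simp only [mem_inter_iff, mem_Iic, mem_Icc]
        constructor
        · rintro ⟨h1, h2, h3⟩; exact ⟨h2, h1⟩
        · rintro ⟨h1, h2⟩; exact ⟨h2, h1, le_trans h2 hm1⟩
      rw [this, Real.volume_Icc, min_eq_left hm1]; norm_num
    · have : Iic m ∩ Icc 0 1 = Icc 0 1 := by
        rw [Set.inter_eq_right]
        intro x hx; exact le_trans hx.2 hm1
      rw [this, Real.volume_Icc, min_eq_right hm1]; norm_num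

lemma unifDisk_ball_eq {R hr : ℝ} (hh : 0 ≤ hr) (hR : 0 < R) (x : Plane)
    (hx : ‖x‖ + hr ≤ R) :
    unifDisk R (Metric.ball x hr) = ENNReal.ofReal (hr ^ 2 / R ^ 2) := by
  have hsub : Metric.ball x hr ⊆ Metric.closedBall (0 : Plane) R := by
    intro y hy
    rw [Metric.mem_closedBall, dist_zero_right]
    have h1 : ‖y - x‖ < hr := by rwa [Metric.mem_ball, dist_eq_norm] at hy
    calc ‖y‖ = ‖y - x + x‖ := by rw [sub_add_cancel]
    _ ≤ ‖y - x‖ + ‖x‖ := norm_add_le _ _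
    _ ≤ hr + ‖x‖ := by linarith
    _ ≤ R := by linarith
  rw [unifDisk, Measure.smul_apply, Measure.restrict_apply measurableSet_ball,
    Set.inter_eq_left.2 hsub, smul_eq_mul, vol_closedBall_plane _ _ hR.le,
    vol_ball_plane _ _ hh]
  have : hr ^ 2 / R ^ 2 = (π * hr ^ 2) / (π * R ^ 2) := by
    rw [mul_div_mul_left _ _ (ne_of_gt Real.pi_pos)]
  rw [this, ENNReal.ofReal_div_of_pos (by positivity), div_eq_mul_inv, mul_comm]

lemma integral_exp_unifUnit {c : ℝ} (hc : 0 < c) :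
    (∫ m, Real.exp (-(c * m)) ∂unifUnit) = (1 - Real.exp (-c)) / c := by
  have h1 : (∫ m, Real.exp (-(c * m)) ∂unifUnit)
      = ∫ m in (0:ℝ)..1, Real.exp (-c * m) := by
    rw [unifUnit, intervalIntegral.integral_of_le zero_le_one,
      ← MeasureTheory.integral_Icc_eq_integral_Ioc]
    simp_rw [neg_mul]
  rw [h1, intervalIntegral.integral_comp_mul_left Real.exp (neg_ne_zero.2 hc.ne')]
  rw [integral_exp]
  rw [smul_eq_mul]
  rw [mul_zero, mul_one]
  rw [Real.exp_zero]
  rw [eq_div_iff hc.ne']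
  field_simp
  ring

lemma tendsto_pow_max (t : ℝ) :
    Tendsto (fun n : ℕ => (max (1 - t / ((n : ℝ) + 2)) 0) ^ n) atTop
      (𝓝 (Real.exp (-t))) := by
  have hshift : Tendsto (fun n : ℕ => (n : ℝ) + 2) atTop atTop :=
    tendsto_atTop_add_const_right _ 2 tendsto_natCast_atTop_atTop
  have hq : Tendsto (fun n : ℕ => t / ((n : ℝ) + 2)) atTop (𝓝 0) :=
    Tendsto.div_atTop tendsto_const_nhds hshift
  have hbase : Tendsto (fun n : ℕ => 1 + (-t) / ((n : ℝ) + 2)) atTop (𝓝 1) := by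
    have := (tendsto_const_nhds (x := (-t)) (f := atTop (α := ℕ))).div_atTop hshift
    simpa using tendsto_const_nhds.add this
  have hpow : Tendsto (fun n : ℕ => (1 + (-t) / ((n : ℝ) + 2)) ^ (n + 2)) atTop
      (𝓝 (Real.exp (-t))) := by
    have := (Real.tendsto_one_add_div_pow_exp (-t)).comp (tendsto_add_atTop_nat 2)
    refine this.congr fun n => ?_
    simp only [Function.comp]
    push_cast
    ring
  have hmul : Tendsto (fun n : ℕ => (1 + (-t) / ((n : ℝ) + 2)) ^ (n + 2) *
      (((1 + (-t) / ((n : ℝ) + 2)) ^ 2)⁻¹)) atTop (𝓝 (Real.exp (-t))) := by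
    have h2 : Tendsto (fun n : ℕ => ((1 + (-t) / ((n : ℝ) + 2)) ^ 2)⁻¹) atTop (𝓝 1) := by
      have := (hbase.pow 2).inv₀ (by norm_num)
      simpa using this
    simpa using hpow.mul h2
  refine Tendsto.congr' ?_ hmul
  have hev : ∀ᶠ n : ℕ in atTop, t / ((n : ℝ) + 2) < 1 :=
    hq.eventually_lt_const one_pos
  filter_upwards [hev] with n hn
  have ha : (0:ℝ) < 1 - t / ((n : ℝ) + 2) := by linarith
  have h2 : 1 + (-t) / ((n : ℝ) + 2) = 1 - t / ((n : ℝ) + 2) := by ring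
  rw [h2, max_eq_left ha.le, pow_add, mul_inv_cancel_right₀ (pow_ne_zero 2 ha.ne')]

lemma ofReal_eq_ofReal_max (x : ℝ) : ENNReal.ofReal x = ENNReal.ofReal (max x 0) := by
  rcases le_total x 0 with hx | hx
  · rw [max_eq_right hx, ENNReal.ofReal_of_nonpos hx, ENNReal.ofReal_zero]
  · rw [max_eq_left hx]

lemma fin_split0 {n : ℕ} (C : Fin (n + 2) → Prop) :
    (∀ j, j ≠ 0 → C j) ↔ (C 1 ∧ ∀ k : Fin n, C k.succ.succ) := by
  constructor
  · intro H
    exact ⟨H 1 (by simp [Fin.ext_iff]), fun k => H _ (Fin.succ_ne_zero _)⟩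
  · rintro ⟨h1, h2⟩ j hj
    induction j using Fin.cases with
    | zero => exact absurd rfl hj
    | succ i =>
      induction i using Fin.cases with
      | zero => simpa [Fin.succ_zero_eq_one] using h1
      | succ k => exact h2 k

lemma fin_split1 {n : ℕ} (C : Fin (n + 2) → Prop) :
    (∀ j, j ≠ 1 → C j) ↔ (C 0 ∧ ∀ k : Fin n, C k.succ.succ) := by
  constructor
  · intro H
    refine ⟨H 0 (by simp [Fin.ext_iff]), fun k => H _ ?_⟩
    simp [Fin.ext_iff]
  · rintro ⟨h1, h2⟩ j hj
    induction j using Fin.cases with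
    | zero => exact h1
    | succ i =>
      induction i using Fin.cases with
      | zero => exact absurd (Fin.succ_zero_eq_one) hj
      | succ k => exact h2 k

/-- The positional event set. -/
def PAx (rT hr Rv : ℝ) : Set (Plane × Plane) :=
  {v | (rT + 2 * hr ≤ ‖v.1‖ ∧ ‖v.1‖ ≤ Rv - hr) ∧ (rT + 2 * hr ≤ ‖v.2‖ ∧ ‖v.2‖ ≤ Rv - hr) ∧
    2 * hr < dist v.1 v.2}

lemma measurableSet_PAx (rT hr Rv : ℝ) : MeasurableSet (PAx rT hr Rv) := by
  exact ((measurableSet_le measurable_const measurable_fst.norm).inter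
      (measurableSet_le measurable_fst.norm measurable_const)).inter
    (((measurableSet_le measurable_const measurable_snd.norm).inter
      (measurableSet_le measurable_snd.norm measurable_const)).inter
    (measurableSet_lt measurable_const (measurable_fst.dist measurable_snd)))

/-- The "no conflicting neighbour" set for one extra point. -/
def Dset (hr : ℝ) (e0 e1 : Plane × ℝ) : Set (Plane × ℝ) :=
  {e | (dist e0.1 e.1 < hr → e0.2 < e.2) ∧ (dist e1.1 e.1 < hr → e1.2 < e.2)}

lemma measurableSet_Dset (hr : ℝ) (e0 e1 : Plane × ℝ) : MeasurableSet (Dset hr e0 e1) := by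
  have : Dset hr e0 e1 =
      ({e : Plane × ℝ | dist e0.1 e.1 < hr}ᶜ ∪ {e | e0.2 < e.2}) ∩
      ({e : Plane × ℝ | dist e1.1 e.1 < hr}ᶜ ∪ {e | e1.2 < e.2}) := by
    ext e
    simp only [Dset, mem_setOf_eq, mem_inter_iff, mem_union, mem_compl_iff, mem_setOf_eq]
    constructor
    · rintro ⟨a, b⟩; exact ⟨imp_iff_not_or.1 a, imp_iff_not_or.1 b⟩
    · rintro ⟨a, b⟩; exact ⟨imp_iff_not_or.2 a, imp_iff_not_or.2 b⟩
  rw [this]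
  exact (((measurableSet_lt (measurable_const.dist measurable_fst) measurable_const).compl.union
      (measurableSet_lt measurable_const measurable_snd)).inter
    ((measurableSet_lt (measurable_const.dist measurable_fst) measurable_const).compl.union
      (measurableSet_lt measurable_const measurable_snd)))

lemma nu_Dset {hr Rv : ℝ} (hh : 0 < hr) (hRv : 0 < Rv) (e0 e1 : Plane × ℝ)
    (h0 : ‖e0.1‖ ≤ Rv - hr) (h1 : ‖e1.1‖ ≤ Rv - hr) (hd : 2 * hr < dist e0.1 e1.1) :
    ((unifDisk Rv).prod unifUnit) (Dset hr e0 e1) =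
      1 - ENNReal.ofReal (hr ^ 2 / Rv ^ 2) *
        (ENNReal.ofReal (min e0.2 1) + ENNReal.ofReal (min e1.2 1)) := by
  haveI := unifDisk_prob hRv
  have hU : Dset hr e0 e1 =
      ((Metric.ball e0.1 hr ×ˢ Iic e0.2) ∪ (Metric.ball e1.1 hr ×ˢ Iic e1.2))ᶜ := by
    ext e
    simp only [Dset, mem_setOf_eq, mem_compl_iff, mem_union, mem_prod, Metric.mem_ball,
      mem_Iic, not_or, not_and, not_le, dist_comm]
  have hdisj : Disjoint (Metric.ball e0.1 hr ×ˢ Iic e0.2) (Metric.ball e1.1 hr ×ˢ Iic e1.2) := by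
    rw [Set.disjoint_left]
    rintro ⟨x, m⟩ ⟨hx0, -⟩ ⟨hx1, -⟩
    simp only [Metric.mem_ball] at hx0 hx1
    have := dist_triangle e0.1 x e1.1
    rw [dist_comm e0.1 x] at this
    linarith [dist_comm x e1.1 ▸ hx1]
  have hmeas : ∀ (x : Plane) (m : ℝ),
      MeasurableSet (Metric.ball x hr ×ˢ Iic m : Set (Plane × ℝ)) :=
    fun x m => measurableSet_ball.prod measurableSet_Iic
  rw [hU, measure_compl ((hmeas _ _).union (hmeas _ _)) (measure_ne_top _ _),
    measure_union hdisj (hmeas _ _), measure_univ]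
  rw [Measure.prod_prod, Measure.prod_prod,
    unifDisk_ball_eq hh.le hRv e0.1 (by linarith), unifDisk_ball_eq hh.le hRv e1.1 (by linarith),
    unifUnit_Iic, unifUnit_Iic, mul_add]

def TAset (rT hr Rv : ℝ) (n : ℕ) : Set ((Plane × ℝ) × (Plane × ℝ) × (Fin n → Plane × ℝ)) :=
  {q | (q.1.1, q.2.1.1) ∈ PAx rT hr Rv}

def TBset (XT : Plane) (hr : ℝ) (n : ℕ) :
    Set ((Plane × ℝ) × (Plane × ℝ) × (Fin n → Plane × ℝ)) :=
  {q | (hr ≤ dist q.1.1 XT ∧ ((dist q.1.1 q.2.1.1 < hr → q.1.2 < q.2.1.2) ∧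
        ∀ k : Fin n, dist q.1.1 (q.2.2 k).1 < hr → q.1.2 < (q.2.2 k).2)) ∧
       (hr ≤ dist q.2.1.1 XT ∧ ((dist q.2.1.1 q.1.1 < hr → q.2.1.2 < q.1.2) ∧
        ∀ k : Fin n, dist q.2.1.1 (q.2.2 k).1 < hr → q.2.1.2 < (q.2.2 k).2))}

lemma measurableSet_TAset (rT hr Rv : ℝ) (n : ℕ) : MeasurableSet (TAset rT hr Rv n) :=
  (measurableSet_PAx rT hr Rv).preimage
    ((measurable_fst.fst).prodMk (measurable_snd.fst.fst))

lemma measurableSet_TBset (XT : Plane) (hr : ℝ) (n : ℕ) : MeasurableSet (TBset XT hr n) := by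
  have m11 : Measurable fun q : (Plane × ℝ) × (Plane × ℝ) × (Fin n → Plane × ℝ) => q.1.1 :=
    measurable_fst.fst
  have m12 : Measurable fun q : (Plane × ℝ) × (Plane × ℝ) × (Fin n → Plane × ℝ) => q.1.2 :=
    measurable_fst.snd
  have m211 : Measurable fun q : (Plane × ℝ) × (Plane × ℝ) × (Fin n → Plane × ℝ) => q.2.1.1 :=
    measurable_snd.fst.fst
  have m212 : Measurable fun q : (Plane × ℝ) × (Plane × ℝ) × (Fin n → Plane × ℝ) => q.2.1.2 :=
    measurable_snd.fst.snd
  have m22 : ∀ k : Fin n,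
      Measurable fun q : (Plane × ℝ) × (Plane × ℝ) × (Fin n → Plane × ℝ) => q.2.2 k :=
    fun k => (measurable_pi_apply k).comp measurable_snd.snd
  have hrw : TBset XT hr n =
      ({q : (Plane × ℝ) × (Plane × ℝ) × (Fin n → Plane × ℝ) | hr ≤ dist q.1.1 XT} ∩
        (({q | dist q.1.1 q.2.1.1 < hr}ᶜ ∪ {q | q.1.2 < q.2.1.2}) ∩
          ⋂ k : Fin n, ({q | dist q.1.1 (q.2.2 k).1 < hr}ᶜ ∪ {q | q.1.2 < (q.2.2 k).2}))) ∩
      ({q | hr ≤ dist q.2.1.1 XT} ∩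
        (({q | dist q.2.1.1 q.1.1 < hr}ᶜ ∪ {q | q.2.1.2 < q.1.2}) ∩
          ⋂ k : Fin n, ({q | dist q.2.1.1 (q.2.2 k).1 < hr}ᶜ ∪ {q | q.2.1.2 < (q.2.2 k).2}))) := by
    ext q
    simp only [TBset, mem_setOf_eq, mem_inter_iff, mem_iInter, mem_union, mem_compl_iff,
      ← imp_iff_not_or]
  rw [hrw]
  refine MeasurableSet.inter (MeasurableSet.inter ?_ (MeasurableSet.inter ?_ ?_))
    (MeasurableSet.inter ?_ (MeasurableSet.inter ?_ ?_))
  · exact measurableSet_le measurable_const (m11.dist measurable_const)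
  · exact (measurableSet_lt (m11.dist m211) measurable_const).compl.union
      (measurableSet_lt m12 m212)
  · exact MeasurableSet.iInter fun k =>
      (measurableSet_lt (m11.dist ((m22 k).fst)) measurable_const).compl.union
        (measurableSet_lt m12 ((m22 k).snd))
  · exact measurableSet_le measurable_const (m211.dist measurable_const)
  · exact (measurableSet_lt (m211.dist m11) measurable_const).compl.union
      (measurableSet_lt m212 m12)
  · exact MeasurableSet.iInter fun k =>
      (measurableSet_lt (m211.dist ((m22 k).fst)) measurable_const).compl.union
        (measurableSet_lt m212 ((m22 k).snd))

lemma measure_main {hr Rv rT : ℝ} (XT : Plane) (hh : 0 < hr) (hRv : 0 < Rv)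
    (hrTnorm : rT = ‖XT‖) (n : ℕ) :
    ((((unifDisk Rv).prod unifUnit).prod (((unifDisk Rv).prod unifUnit).prod
        (Measure.pi fun _ : Fin n => (unifDisk Rv).prod unifUnit)))
      (TAset rT hr Rv n ∩ TBset XT hr n)
      = ((unifDisk Rv).prod (unifDisk Rv)) (PAx rT hr Rv) *
        ∫⁻ ms : ℝ × ℝ, ((1 : ℝ≥0∞) - ENNReal.ofReal (hr ^ 2 / Rv ^ 2) *
          (ENNReal.ofReal (min ms.1 1) + ENNReal.ofReal (min ms.2 1))) ^ n
          ∂(unifUnit.prod unifUnit))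
    ∧ ((((unifDisk Rv).prod unifUnit).prod (((unifDisk Rv).prod unifUnit).prod
        (Measure.pi fun _ : Fin n => (unifDisk Rv).prod unifUnit)))
      (TAset rT hr Rv n) = ((unifDisk Rv).prod (unifDisk Rv)) (PAx rT hr Rv)) := by
  haveI := unifDisk_prob hRv
  set μD := unifDisk Rv with hμD
  set ν := μD.prod unifUnit with hνdef
  set piν := Measure.pi (fun _ : Fin n => ν) with hpiνdef
  -- the rearrangement map is measure preserving
  have hψ : MeasurePreserving
      (fun w : (Plane × ℝ) × (Plane × ℝ) => ((w.1.1, w.2.1), (w.1.2, w.2.2)))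
      (ν.prod ν) ((μD.prod μD).prod (unifUnit.prod unifUnit)) := by
    have h1 := measurePreserving_prodAssoc μD unifUnit ν
    have h2a := (measurePreserving_prodAssoc unifUnit μD unifUnit).symm
      MeasurableEquiv.prodAssoc
    have h2b := (Measure.measurePreserving_swap (μ := unifUnit) (ν := μD)).prod
      (MeasurePreserving.id unifUnit)
    have h2c := measurePreserving_prodAssoc μD unifUnit unifUnit
    have h2 := (h2c.comp h2b).comp h2a
    have h3 := (MeasurePreserving.id μD).prod h2
    have h4 := (measurePreserving_prodAssoc μD μD (unifUnit.prod unifUnit)).symm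
      MeasurableEquiv.prodAssoc
    exact ((h4.comp h3).comp h1 : _)
  have hassoc := measurePreserving_prodAssoc ν ν piν
  have key : ∀ S : Set ((Plane × ℝ) × (Plane × ℝ) × (Fin n → Plane × ℝ)), MeasurableSet S →
      (ν.prod (ν.prod piν)) S = ∫⁻ q, piν {g | (q.1, (q.2, g)) ∈ S} ∂(ν.prod ν) := by
    intro S hS
    rw [← hassoc.map_eq, Measure.map_apply hassoc.measurable hS,
      Measure.prod_apply (hassoc.measurable hS)]
    rfl
  set Gm : ℝ × ℝ → ℝ≥0∞ := fun ms => ((1 : ℝ≥0∞) - ENNReal.ofReal (hr ^ 2 / Rv ^ 2) *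
    (ENNReal.ofReal (min ms.1 1) + ENNReal.ofReal (min ms.2 1))) ^ n with hGm
  set F : (Plane × Plane) × (ℝ × ℝ) → ℝ≥0∞ :=
    fun w => (PAx rT hr Rv).indicator (1 : (Plane × Plane) → ℝ≥0∞) w.1 * Gm w.2 with hF
  set FA : (Plane × Plane) × (ℝ × ℝ) → ℝ≥0∞ :=
    fun w => (PAx rT hr Rv).indicator (1 : (Plane × Plane) → ℝ≥0∞) w.1 *
      (fun _ : ℝ × ℝ => (1:ℝ≥0∞)) w.2 with hFA
  have hGmmeas : Measurable Gm := by
    refine Measurable.pow_const (Measurable.sub (measurable_const (a := (1:ℝ≥0∞))) ?_) n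
    refine Measurable.const_mul (Measurable.add (M := ℝ≥0∞) ?_ ?_) _
    · exact ENNReal.measurable_ofReal.comp ((measurable_fst.min measurable_const))
    · exact ENNReal.measurable_ofReal.comp ((measurable_snd.min measurable_const))
  have hFmeas : Measurable F :=
    ((measurable_one.indicator (measurableSet_PAx rT hr Rv)).comp measurable_fst).mul
      (hGmmeas.comp measurable_snd)
  have hFAmeas : Measurable FA :=
    ((measurable_one.indicator (measurableSet_PAx rT hr Rv)).comp measurable_fst).mul
      measurable_const
  -- section computation for TA ∩ TB
  have hsecAB : ∀ q : (Plane × ℝ) × (Plane × ℝ),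
      piν {g | (q.1, (q.2, g)) ∈ TAset rT hr Rv n ∩ TBset XT hr n} =
        F ((q.1.1, q.2.1), (q.1.2, q.2.2)) := by
    intro q
    by_cases hq : (q.1.1, q.2.1) ∈ PAx rT hr Rv
    · have hsec : {g | (q.1, (q.2, g)) ∈ TAset rT hr Rv n ∩ TBset XT hr n}
          = Set.pi Set.univ (fun _ : Fin n => Dset hr q.1 q.2) := by
        obtain ⟨⟨hq01, hq02⟩, ⟨hq11, hq12⟩, hqd⟩ := hq
        ext g
        simp only [mem_setOf_eq, mem_inter_iff, Set.mem_pi, Set.mem_univ, true_implies,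
          TAset, TBset, PAx, Dset]
        constructor
        · rintro ⟨-, ⟨-, -, h03⟩, -, -, h13⟩ k
          exact ⟨h03 k, h13 k⟩
        · intro hg
          have hd0 : hr ≤ dist q.1.1 XT := by
            have h1 : ‖q.1.1‖ - ‖XT‖ ≤ ‖q.1.1 - XT‖ := norm_sub_norm_le _ _
            rw [dist_eq_norm]
            rw [hrTnorm] at hq01
            linarith
          have hd1 : hr ≤ dist q.2.1 XT := by
            have h1 : ‖q.2.1‖ - ‖XT‖ ≤ ‖q.2.1 - XT‖ := norm_sub_norm_le _ _
            rw [dist_eq_norm]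
            rw [hrTnorm] at hq11
            linarith
          refine ⟨⟨⟨hq01, hq02⟩, ⟨hq11, hq12⟩, hqd⟩, ⟨hd0, ⟨?_, fun k => (hg k).1⟩⟩,
            ⟨hd1, ⟨?_, fun k => (hg k).2⟩⟩⟩
          · intro hcon; linarith
          · intro hcon; rw [dist_comm] at hcon; linarith
      rw [hsec, Measure.pi_pi]
      have hD := nu_Dset hh hRv q.1 q.2 hq.1.2 hq.2.1.2 hq.2.2
      rw [hF]
      simp only [Set.indicator_of_mem hq, Pi.one_apply, one_mul]
      rw [Finset.prod_const, hD, Finset.card_univ, Fintype.card_fin, hGm]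
    · have hsec : {g | (q.1, (q.2, g)) ∈ TAset rT hr Rv n ∩ TBset XT hr n} = ∅ := by
        ext g
        simp only [mem_setOf_eq, mem_inter_iff, mem_empty_iff_false, iff_false, not_and]
        intro hA
        exact absurd hA hq
      rw [hsec, measure_empty, hF]
      simp only [Set.indicator_of_notMem hq, zero_mul]
  have hsecA : ∀ q : (Plane × ℝ) × (Plane × ℝ),
      piν {g | (q.1, (q.2, g)) ∈ TAset rT hr Rv n} =
        FA ((q.1.1, q.2.1), (q.1.2, q.2.2)) := by
    intro q
    by_cases hq : (q.1.1, q.2.1) ∈ PAx rT hr Rv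
    · have hsec : {g | (q.1, (q.2, g)) ∈ TAset rT hr Rv n} = Set.univ := by
        ext g
        simp only [mem_setOf_eq, mem_univ, iff_true]
        exact hq
      rw [hsec, measure_univ, hFA]
      simp only [Set.indicator_of_mem hq, Pi.one_apply, one_mul]
    · have hsec : {g | (q.1, (q.2, g)) ∈ TAset rT hr Rv n} = ∅ := by
        ext g
        simp only [mem_setOf_eq, mem_empty_iff_false, iff_false]
        exact hq
      rw [hsec, measure_empty, hFA]
      simp only [Set.indicator_of_notMem hq, zero_mul]
  constructor
  · rw [key _ ((measurableSet_TAset rT hr Rv n).inter (measurableSet_TBset XT hr n)),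
      lintegral_congr hsecAB]
    rw [show (∫⁻ q, F ((q.1.1, q.2.1), (q.1.2, q.2.2)) ∂(ν.prod ν))
        = ∫⁻ w, F w ∂((μD.prod μD).prod (unifUnit.prod unifUnit)) from
      hψ.lintegral_comp hFmeas]
    rw [hF]
    rw [lintegral_prod_mul ((measurable_one.indicator (measurableSet_PAx rT hr Rv))).aemeasurable
      hGmmeas.aemeasurable]
    rw [lintegral_indicator_one (measurableSet_PAx rT hr Rv), hGm]
  · rw [key _ (measurableSet_TAset rT hr Rv n), lintegral_congr hsecA]
    rw [show (∫⁻ q, FA ((q.1.1, q.2.1), (q.1.2, q.2.2)) ∂(ν.prod ν))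
        = ∫⁻ w, FA w ∂((μD.prod μD).prod (unifUnit.prod unifUnit)) from
      hψ.lintegral_comp hFAmeas]
    rw [hFA]
    rw [lintegral_prod_mul ((measurable_one.indicator (measurableSet_PAx rT hr Rv))).aemeasurable
      measurable_const.aemeasurable]
    rw [lintegral_indicator_one (measurableSet_PAx rT hr Rv), lintegral_one, measure_univ,
      mul_one]

lemma PAx_pos {hr Rv rT : ℝ} (hh : 0 < hr) (hrT0 : 0 ≤ rT) (hbig : rT + 5 * hr ≤ Rv) :
    ((unifDisk Rv).prod (unifDisk Rv)) (PAx rT hr Rv) ≠ 0 := by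
  have hRv : 0 < Rv := lt_of_lt_of_le (by linarith) hbig
  haveI := unifDisk_prob hRv
  set a : Plane := (rT + 3 * hr) • EuclideanSpace.single (0 : Fin 2) (1 : ℝ) with ha
  have hnorm_single : ‖EuclideanSpace.single (0 : Fin 2) (1 : ℝ)‖ = 1 := by
    rw [EuclideanSpace.norm_single]; norm_num
  have hna : ‖a‖ = rT + 3 * hr := by
    rw [ha, norm_smul, hnorm_single, mul_one, Real.norm_eq_abs, abs_of_nonneg (by linarith)]
  have hnb : ‖-a‖ = rT + 3 * hr := by rw [norm_neg, hna]
  have hsub : Metric.ball a hr ×ˢ Metric.ball (-a) hr ⊆ PAx rT hr Rv := by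
    rintro ⟨x, y⟩ ⟨hx, hy⟩
    simp only [Metric.mem_ball] at hx hy
    have hxa : ‖x - a‖ < hr := by rwa [← dist_eq_norm]
    have hyb : ‖y + a‖ < hr := by rw [← sub_neg_eq_add, ← dist_eq_norm]; exact hy
    have l1 : ‖a‖ - ‖x‖ ≤ ‖x - a‖ := by rw [norm_sub_rev]; exact norm_sub_norm_le a x
    have l2 : ‖x‖ - ‖a‖ ≤ ‖x - a‖ := norm_sub_norm_le x a
    have l3 : ‖-a‖ - ‖y‖ ≤ ‖y + a‖ := by
      rw [← sub_neg_eq_add y a, norm_sub_rev]; exact norm_sub_norm_le (-a) y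
    have l4 : ‖y‖ - ‖-a‖ ≤ ‖y + a‖ := by
      rw [← sub_neg_eq_add y a]; exact norm_sub_norm_le y (-a)
    have l5 : 2 * ‖a‖ ≤ ‖x - y‖ + ‖x - a‖ + ‖y + a‖ := by
      have e1 : (2 : ℝ) • a = ((x - y) - (x - a)) + (y + a) := by
        rw [two_smul]; abel
      have e2 : ‖(2 : ℝ) • a‖ = 2 * ‖a‖ := by
        rw [norm_smul, Real.norm_eq_abs]; norm_num
      calc 2 * ‖a‖ = ‖((x - y) - (x - a)) + (y + a)‖ := by rw [← e2, e1]
      _ ≤ ‖(x - y) - (x - a)‖ + ‖y + a‖ := norm_add_le _ _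
      _ ≤ ‖x - y‖ + ‖x - a‖ + ‖y + a‖ := by
          have := norm_sub_le (x - y) (x - a); linarith
    refine ⟨⟨by rw [hna] at l1; linarith, by rw [hna] at l2; linarith⟩,
      ⟨by rw [hnb] at l3; linarith, by rw [hnb] at l4; linarith⟩, ?_⟩
    rw [dist_eq_norm]
    rw [hna] at l5
    linarith
  refine ne_of_gt (lt_of_lt_of_le ?_ (measure_mono hsub))
  rw [Measure.prod_prod,
    unifDisk_ball_eq hh.le hRv a (by rw [hna]; linarith),
    unifDisk_ball_eq hh.le hRv (-a) (by rw [hnb]; linarith)]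
  exact ENNReal.mul_pos (by simp [ENNReal.ofReal_pos]; positivity)
    (by simp [ENNReal.ofReal_pos]; positivity)

lemma map_joint {N : ℕ} {Ω : Type} [MeasurableSpace Ω] (P : Measure Ω)
    [IsProbabilityMeasure P]
    (X : Fin N → Ω → Plane) (M : Fin N → Ω → ℝ)
    (hmX : ∀ i, Measurable (X i)) (hmM : ∀ i, Measurable (M i))
    (hind : iIndepFun (fun i => fun ω => (X i ω, M i ω)) P)
    (ν : Measure (Plane × ℝ)) [IsProbabilityMeasure ν]
    (hlaw : ∀ i, P.map (fun ω => (X i ω, M i ω)) = ν) :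
    P.map (fun ω i => (X i ω, M i ω)) = Measure.pi (fun _ : Fin N => ν) := by
  refine (Measure.pi_eq fun s hs => ?_).symm
  have hVmeas : Measurable (fun ω (i : Fin N) => (X i ω, M i ω)) :=
    measurable_pi_lambda _ (fun i => (hmX i).prodMk (hmM i))
  rw [Measure.map_apply hVmeas (MeasurableSet.univ_pi hs)]
  have hpre : (fun ω (i : Fin N) => (X i ω, M i ω)) ⁻¹' (Set.pi univ s)
      = ⋂ i ∈ Finset.univ, (fun ω => (X i ω, M i ω)) ⁻¹' (s i) := by
    ext ω
    simp [Set.mem_pi]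
  rw [hpre, hind.measure_inter_preimage_eq_mul Finset.univ (fun i _ => hs i)]
  refine Finset.prod_congr rfl fun i _ => ?_
  rw [← hlaw i, Measure.map_apply ((hmX i).prodMk (hmM i)) (hs i)]

lemma W'_mp (ν : Measure (Plane × ℝ)) [IsProbabilityMeasure ν] (n : ℕ) :
    MeasurePreserving
      (fun f : Fin (n + 2) → Plane × ℝ => (f 0, (f 1, fun k : Fin n => f k.succ.succ)))
      (Measure.pi fun _ : Fin (n + 2) => ν)
      (ν.prod (ν.prod (Measure.pi fun _ : Fin n => ν))) := by
  have h1 := measurePreserving_piFinSuccAbove (fun _ : Fin (n + 2) => ν) 0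
  have h2 := (MeasurePreserving.id ν).prod
    (measurePreserving_piFinSuccAbove (fun _ : Fin (n + 1) => ν) 0)
  have h3 := h2.comp h1
  have heq : (Prod.map (id : Plane × ℝ → Plane × ℝ)
        ⇑(MeasurableEquiv.piFinSuccAbove (fun _ : Fin (n + 1) => Plane × ℝ) 0)) ∘
      ⇑(MeasurableEquiv.piFinSuccAbove (fun _ : Fin (n + 2) => Plane × ℝ) 0)
      = fun f => (f 0, (f 1, fun k : Fin n => f k.succ.succ)) := by
    funext f
    simp [MeasurableEquiv.piFinSuccAbove, Function.comp, Fin.zero_succAbove,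
      Fin.succ_zero_eq_one, Fin.removeNth]
    constructor
    · show f (0 : Fin (n+1)).succ = _
      rw [Fin.succ_zero_eq_one]
    · rfl
  rw [heq] at h3
  exact h3

lemma cont_phi (a : ℝ) (n : ℕ) :
    Continuous (fun ms : ℝ × ℝ => (max (1 - a * (ms.1 + ms.2)) 0) ^ n) :=
  ((continuous_const.sub (continuous_const.mul (continuous_fst.add continuous_snd))).max
    continuous_const).pow n

lemma ae_mem_Icc2 : ∀ᵐ ms : ℝ × ℝ ∂(unifUnit.prod unifUnit),
    ms ∈ (Icc (0:ℝ) 1 ×ˢ Icc (0:ℝ) 1) := by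
  rw [unifUnit, Measure.prod_restrict]
  exact ae_restrict_mem (measurableSet_Icc.prod measurableSet_Icc)

lemma integrable_phi {a : ℝ} (ha : 0 ≤ a) (n : ℕ) :
    Integrable (fun ms : ℝ × ℝ => (max (1 - a * (ms.1 + ms.2)) 0) ^ n)
      (unifUnit.prod unifUnit) := by
  haveI : IsProbabilityMeasure (unifUnit.prod unifUnit) := by infer_instance
  refine (integrable_const (1:ℝ)).mono' (cont_phi a n).aestronglyMeasurable ?_
  filter_upwards [ae_mem_Icc2] with ms hms
  rcases hms with ⟨h1, h2⟩
  have hs : 0 ≤ ms.1 + ms.2 := by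
    have := h1.1; have := h2.1; linarith
  have hmax0 : (0:ℝ) ≤ max (1 - a * (ms.1 + ms.2)) 0 := le_max_right _ _
  have hmax1 : max (1 - a * (ms.1 + ms.2)) 0 ≤ 1 := by
    apply max_le _ zero_le_one
    nlinarith
  rw [Real.norm_eq_abs, abs_of_nonneg (pow_nonneg hmax0 n)]
  exact pow_le_one₀ hmax0 hmax1

lemma Sn_ofReal {a : ℝ} (ha : 0 ≤ a) (n : ℕ) :
    (∫⁻ ms : ℝ × ℝ, ((1 : ℝ≥0∞) - ENNReal.ofReal a *
      (ENNReal.ofReal (min ms.1 1) + ENNReal.ofReal (min ms.2 1))) ^ n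
      ∂(unifUnit.prod unifUnit))
    = ENNReal.ofReal (∫ ms : ℝ × ℝ, (max (1 - a * (ms.1 + ms.2)) 0) ^ n
        ∂(unifUnit.prod unifUnit)) := by
  rw [ofReal_integral_eq_lintegral_ofReal (integrable_phi ha n)
    (Filter.Eventually.of_forall fun ms => pow_nonneg (le_max_right _ _) n)]
  have hrwμ : unifUnit.prod unifUnit
      = (volume.prod volume).restrict (Icc (0:ℝ) 1 ×ˢ Icc (0:ℝ) 1) := by
    rw [unifUnit, Measure.prod_restrict]
  rw [hrwμ]
  refine setLIntegral_congr_fun (measurableSet_Icc.prod measurableSet_Icc)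
    (fun ms hms => ?_)
  rcases hms with ⟨h1, h2⟩
  have hm1 : min ms.1 1 = ms.1 := min_eq_left h1.2
  have hm2 : min ms.2 1 = ms.2 := min_eq_left h2.2
  have hnn : (0:ℝ) ≤ a * (ms.1 + ms.2) := by
    have := h1.1; have := h2.1; nlinarith
  rw [hm1, hm2, ← ENNReal.ofReal_add h1.1 h2.1, ← ENNReal.ofReal_mul ha,
    ← ENNReal.ofReal_one, ← ENNReal.ofReal_sub 1 hnn,
    ofReal_eq_ofReal_max (1 - a * (ms.1 + ms.2)),
    ← ENNReal.ofReal_pow (le_max_right _ _)]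

lemma tendsto_In {c : ℝ} (hc : 0 < c) :
    Tendsto (fun n : ℕ => ∫ ms : ℝ × ℝ,
        (max (1 - (c / ((n : ℝ) + 2)) * (ms.1 + ms.2)) 0) ^ n ∂(unifUnit.prod unifUnit))
      atTop (𝓝 (((1 - Real.exp (-c)) / c) ^ 2)) := by
  haveI : IsProbabilityMeasure (unifUnit.prod unifUnit) := by infer_instance
  have hDCT := MeasureTheory.tendsto_integral_of_dominated_convergence
    (F := fun (n : ℕ) (ms : ℝ × ℝ) => (max (1 - (c / ((n : ℝ) + 2)) * (ms.1 + ms.2)) 0) ^ n)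
    (f := fun ms : ℝ × ℝ => Real.exp (-(c * (ms.1 + ms.2))))
    (bound := fun _ => (1:ℝ))
    (μ := unifUnit.prod unifUnit)
    (fun n => (cont_phi _ n).aestronglyMeasurable)
    (integrable_const 1)
    (fun n => by
      filter_upwards [ae_mem_Icc2] with ms hms
      rcases hms with ⟨h1, h2⟩
      have hs : 0 ≤ ms.1 + ms.2 := by have := h1.1; have := h2.1; linarith
      have han : 0 ≤ c / ((n : ℝ) + 2) := by positivity
      have hmax0 : (0:ℝ) ≤ max (1 - (c / ((n : ℝ) + 2)) * (ms.1 + ms.2)) 0 := le_max_right _ _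
      have hmax1 : max (1 - (c / ((n : ℝ) + 2)) * (ms.1 + ms.2)) 0 ≤ 1 := by
        apply max_le _ zero_le_one
        nlinarith
      rw [Real.norm_eq_abs, abs_of_nonneg (pow_nonneg hmax0 n)]
      exact pow_le_one₀ hmax0 hmax1)
    (by
      filter_upwards [ae_mem_Icc2] with ms hms
      have heq : ∀ n : ℕ, (max (1 - (c / ((n : ℝ) + 2)) * (ms.1 + ms.2)) 0) ^ n
          = (max (1 - (c * (ms.1 + ms.2)) / ((n : ℝ) + 2)) 0) ^ n := by
        intro n
        rw [div_mul_eq_mul_div]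
      simp_rw [heq]
      exact tendsto_pow_max (c * (ms.1 + ms.2)))
  have hval : (∫ ms : ℝ × ℝ, Real.exp (-(c * (ms.1 + ms.2))) ∂(unifUnit.prod unifUnit))
      = ((1 - Real.exp (-c)) / c) ^ 2 := by
    have hsplit : (fun ms : ℝ × ℝ => Real.exp (-(c * (ms.1 + ms.2))))
        = fun ms : ℝ × ℝ => Real.exp (-(c * ms.1)) * Real.exp (-(c * ms.2)) := by
      funext ms
      rw [← Real.exp_add]
      ring_nf
    rw [hsplit]
    exact (MeasureTheory.integral_prod_mul (μ := unifUnit) (ν := unifUnit)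
      (fun m : ℝ => Real.exp (-(c * m))) (fun m : ℝ => Real.exp (-(c * m)))).trans
      (by rw [integral_exp_unifUnit hc, sq])
  rw [← hval]
  exact hDCT

/-- HC-II, joint conditional.  Fix `ρ_p > 0`, `h > 0`, `X_T ∈ ℝ²` with
`r_T = |X_T|`.  For each `n ≥ 2` let `R_n = √(n/(π ρ_p))`, `X_1, …, X_n` i.i.d. uniform
on the disk of radius `R_n`, `M_1, …, M_n` i.i.d. uniform marks on `[0,1]` independent of
the positions.  `P_i = 1` iff `|X_i − X_T| ≥ h` and `M_i < M_j` for every `j ≠ i` with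
`|X_i − X_j| < h`; `𝒜_n` is the event that `X_1, X_2` lie in the annulus
`{x : r_T + 2h ≤ |x| ≤ R_n − h}` and `|X_1 − X_2| > 2h`.  Then
`Pr(P_1 = 1 ∧ P_2 = 1 | 𝒜_n) → ((1 − exp(−π ρ_p h²))/(π ρ_p h²))²`. -/
theorem stmt11 (ρp h : ℝ) (hρp : 0 < ρp) (hh : 0 < h)
    (XT : EuclideanSpace ℝ (Fin 2)) (rT : ℝ) (hrT : rT = ‖XT‖)
    (R : ℕ → ℝ) (hR : ∀ n : ℕ, R n = Real.sqrt (n / (π * ρp)))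
    (Ω : ℕ → Type) [∀ n, MeasurableSpace (Ω n)]
    (P : (n : ℕ) → Measure (Ω n)) (hprob : ∀ n, IsProbabilityMeasure (P n))
    (X : (n : ℕ) → Fin n → Ω n → EuclideanSpace ℝ (Fin 2))
    (M : (n : ℕ) → Fin n → Ω n → ℝ)
    (hmeasX : ∀ n i, Measurable (X n i)) (hmeasM : ∀ n i, Measurable (M n i))
    (hindep : ∀ n, iIndepFun
      (fun i : Fin n => fun ω => (X n i ω, M n i ω)) (P n))
    (hlaw : ∀ n (i : Fin n), (P n).map (fun ω => (X n i ω, M n i ω)) =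
      (unifDisk (R n)).prod unifUnit) :
    Tendsto
      (fun n : ℕ =>
        (((P (n + 2))[|{ω | (rT + 2 * h ≤ ‖X (n + 2) 0 ω‖ ∧ ‖X (n + 2) 0 ω‖ ≤ R (n + 2) - h) ∧
            (rT + 2 * h ≤ ‖X (n + 2) 1 ω‖ ∧ ‖X (n + 2) 1 ω‖ ≤ R (n + 2) - h) ∧
            2 * h < dist (X (n + 2) 0 ω) (X (n + 2) 1 ω)}])
          {ω | (h ≤ dist (X (n + 2) 0 ω) XT ∧
              ∀ j : Fin (n + 2), j ≠ 0 →
                dist (X (n + 2) 0 ω) (X (n + 2) j ω) < h →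
                  M (n + 2) 0 ω < M (n + 2) j ω) ∧
            (h ≤ dist (X (n + 2) 1 ω) XT ∧
              ∀ j : Fin (n + 2), j ≠ 1 →
                dist (X (n + 2) 1 ω) (X (n + 2) j ω) < h →
                  M (n + 2) 1 ω < M (n + 2) j ω)}).toReal)
      atTop
      (nhds (((1 - Real.exp (-(π * ρp * h ^ 2))) / (π * ρp * h ^ 2)) ^ 2)) := by
  set c : ℝ := π * ρp * h ^ 2 with hcdef
  have hc : 0 < c := by positivity
  have hrT0 : 0 ≤ rT := hrT ▸ norm_nonneg XT
  refine Tendsto.congr' ?_ (tendsto_In hc)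
  -- eventually R (n+2) is large
  have hshift : Tendsto (fun n : ℕ => (n : ℝ) + 2) atTop atTop :=
    tendsto_atTop_add_const_right _ 2 tendsto_natCast_atTop_atTop
  have hev : ∀ᶠ n : ℕ in atTop, rT + 5 * h ≤ R (n + 2) := by
    filter_upwards [hshift.eventually_ge_atTop ((rT + 5 * h) ^ 2 * (π * ρp))] with n hn
    rw [hR (n + 2)]
    have h1 : rT + 5 * h = Real.sqrt ((rT + 5 * h) ^ 2) :=
      (Real.sqrt_sq (by positivity)).symm
    rw [h1]
    apply Real.sqrt_le_sqrt
    rw [le_div_iff₀ (by positivity)]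
    push_cast
    linarith
  filter_upwards [hev] with n hbig
  -- notation for this n
  set Rv := R (n + 2) with hRvdef
  have hRvpos : 0 < Rv := lt_of_lt_of_le (by positivity) hbig
  haveI hPprob := hprob (n + 2)
  haveI := unifDisk_prob hRvpos
  set ν : Measure (Plane × ℝ) := (unifDisk Rv).prod unifUnit with hνdef
  set piν := Measure.pi (fun _ : Fin n => ν) with hpiνdef
  -- the joint law
  have hmapV : (P (n + 2)).map (fun ω (i : Fin (n + 2)) => (X (n + 2) i ω, M (n + 2) i ω))
      = Measure.pi (fun _ : Fin (n + 2) => ν) :=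
    map_joint (P (n + 2)) (X (n + 2)) (M (n + 2)) (hmeasX (n + 2)) (hmeasM (n + 2))
      (hindep (n + 2)) ν (fun i => hlaw (n + 2) i)
  have hVmeas : Measurable (fun ω (i : Fin (n + 2)) => (X (n + 2) i ω, M (n + 2) i ω)) :=
    measurable_pi_lambda _ (fun i => (hmeasX (n + 2) i).prodMk (hmeasM (n + 2) i))
  set Wfun : Ω (n + 2) → (Plane × ℝ) × (Plane × ℝ) × (Fin n → Plane × ℝ) :=
    fun ω => ((X (n + 2) 0 ω, M (n + 2) 0 ω), ((X (n + 2) 1 ω, M (n + 2) 1 ω),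
      fun k : Fin n => (X (n + 2) k.succ.succ ω, M (n + 2) k.succ.succ ω))) with hWdef
  have hW'mp := W'_mp ν n
  have hWmeas : Measurable Wfun := by
    refine Measurable.prodMk (((hmeasX _ _).prodMk (hmeasM _ _)))
      (Measurable.prodMk ((hmeasX _ _).prodMk (hmeasM _ _)) ?_)
    exact measurable_pi_lambda _ (fun k => (hmeasX _ _).prodMk (hmeasM _ _))
  have hmapW : (P (n + 2)).map Wfun = ν.prod (ν.prod piν) := by
    have hcomp : Wfun = (fun f : Fin (n + 2) → Plane × ℝ =>
        (f 0, (f 1, fun k : Fin n => f k.succ.succ))) ∘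
        (fun ω (i : Fin (n + 2)) => (X (n + 2) i ω, M (n + 2) i ω)) := rfl
    rw [hcomp, ← Measure.map_map hW'mp.measurable hVmeas, hmapV, hW'mp.map_eq]
  -- the events
  set EA := {ω | (rT + 2 * h ≤ ‖X (n + 2) 0 ω‖ ∧ ‖X (n + 2) 0 ω‖ ≤ R (n + 2) - h) ∧
      (rT + 2 * h ≤ ‖X (n + 2) 1 ω‖ ∧ ‖X (n + 2) 1 ω‖ ≤ R (n + 2) - h) ∧
      2 * h < dist (X (n + 2) 0 ω) (X (n + 2) 1 ω)} with hEAdef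
  set EB := {ω | (h ≤ dist (X (n + 2) 0 ω) XT ∧
      ∀ j : Fin (n + 2), j ≠ 0 →
        dist (X (n + 2) 0 ω) (X (n + 2) j ω) < h → M (n + 2) 0 ω < M (n + 2) j ω) ∧
      (h ≤ dist (X (n + 2) 1 ω) XT ∧
      ∀ j : Fin (n + 2), j ≠ 1 →
        dist (X (n + 2) 1 ω) (X (n + 2) j ω) < h → M (n + 2) 1 ω < M (n + 2) j ω)} with hEBdef
  have hEA : EA = Wfun ⁻¹' (TAset rT h Rv n) := rfl
  have hEB : EB = Wfun ⁻¹' (TBset XT h n) := by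
    ext ω
    simp only [hEBdef, mem_setOf_eq, mem_preimage, TBset, hWdef]
    rw [fin_split0 (fun j => dist (X (n + 2) 0 ω) (X (n + 2) j ω) < h →
          M (n + 2) 0 ω < M (n + 2) j ω),
      fin_split1 (fun j => dist (X (n + 2) 1 ω) (X (n + 2) j ω) < h →
          M (n + 2) 1 ω < M (n + 2) j ω)]
  have hEAmeas : MeasurableSet EA := by
    rw [hEA]; exact (measurableSet_TAset rT h Rv n).preimage hWmeas
  -- values of the measures
  have hPA : (P (n + 2)) EA = ((unifDisk Rv).prod (unifDisk Rv)) (PAx rT h Rv) := by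
    rw [hEA, ← Measure.map_apply hWmeas (measurableSet_TAset rT h Rv n), hmapW]
    exact (measure_main XT hh hRvpos hrT n).2
  have hPAB : (P (n + 2)) (EA ∩ EB)
      = ((unifDisk Rv).prod (unifDisk Rv)) (PAx rT h Rv) *
        ∫⁻ ms : ℝ × ℝ, ((1 : ℝ≥0∞) - ENNReal.ofReal (h ^ 2 / Rv ^ 2) *
          (ENNReal.ofReal (min ms.1 1) + ENNReal.ofReal (min ms.2 1))) ^ n
          ∂(unifUnit.prod unifUnit) := by
    rw [hEA, hEB, ← Set.preimage_inter,
      ← Measure.map_apply hWmeas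
        ((measurableSet_TAset rT h Rv n).inter (measurableSet_TBset XT h n)), hmapW]
    exact (measure_main XT hh hRvpos hrT n).1
  have ha0 : ((unifDisk Rv).prod (unifDisk Rv)) (PAx rT h Rv) ≠ 0 := PAx_pos hh hrT0 hbig
  have hatop : ((unifDisk Rv).prod (unifDisk Rv)) (PAx rT h Rv) ≠ ⊤ := measure_ne_top _ _
  have hcond : (P (n + 2))[EB|EA]
      = ∫⁻ ms : ℝ × ℝ, ((1 : ℝ≥0∞) - ENNReal.ofReal (h ^ 2 / Rv ^ 2) *
          (ENNReal.ofReal (min ms.1 1) + ENNReal.ofReal (min ms.2 1))) ^ n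
          ∂(unifUnit.prod unifUnit) := by
    rw [cond_apply hEAmeas, hPAB, hPA, ← mul_assoc, ENNReal.inv_mul_cancel ha0 hatop, one_mul]
  -- identify the ratio h²/Rv² with c/(n+2)
  have hRsq : Rv ^ 2 = ((n : ℝ) + 2) / (π * ρp) := by
    rw [hRvdef, hR (n + 2), Real.sq_sqrt (by positivity)]
    push_cast
    ring_nf
  have haeq : c / ((n : ℝ) + 2) = h ^ 2 / Rv ^ 2 := by
    rw [hRsq, hcdef]
    field_simp
  -- conclude
  show (∫ ms : ℝ × ℝ, (max (1 - (c / ((n : ℝ) + 2)) * (ms.1 + ms.2)) 0) ^ n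
      ∂(unifUnit.prod unifUnit)) = ((P (n + 2))[EB|EA]).toReal
  rw [hcond, Sn_ofReal (by positivity : (0:ℝ) ≤ h ^ 2 / Rv ^ 2) n,
    ENNReal.toReal_ofReal (integral_nonneg fun ms => pow_nonneg (le_max_right _ _) n), haeq]
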